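/- arXiv:2103.16402 — 4 statements merged into one kernel-verified Lean document; each statement's English description precedes it below -/
import Mathlib

section
/- Let y : [0,∞) → ℝ be differentiable and suppose that y'(λ) ≤ -y(λ)²/2 for every λ ≥ 0. Then y(λ) ≥ 0 for every λ ≥ 0. -/
/-- Scalar Raychaudhuri comparison: if `y` is differentiable on `[0,∞)` and
satisfies `y' ≤ -y²/2` there, then `y ≥ 0` on `[0,∞)`. -/
theorem stmt_0 (y y' : ℝ → ℝ)
    (hderiv : ∀ l ∈ Set.Ici (0 : ℝ), HasDerivWithinAt y (y' l) (Set.Ici 0) l)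
    (hineq : ∀ l ∈ Set.Ici (0 : ℝ), y' l ≤ -(y l) ^ 2 / 2) :
    ∀ l ∈ Set.Ici (0 : ℝ), 0 ≤ y l := by
  intro l hl
  by_contra hneg
  push_neg at hneg
  have hl0 : (0:ℝ) ≤ l := hl
  -- continuity of y on Ici 0
  have hcont : ContinuousOn y (Set.Ici 0) := fun x hx =>
    (hderiv x hx).continuousWithinAt
  -- at interior points of Ici l, y has a true derivative
  have hDA : ∀ t ∈ Set.Ioi l, HasDerivAt y (y' t) t := by
    intro t ht
    have ht0 : (0:ℝ) < t := lt_of_le_of_lt hl0 ht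
    exact (hderiv t (le_of_lt ht0)).hasDerivAt (Ici_mem_nhds ht0)
  -- y is antitone on Ici l
  have hanti : AntitoneOn y (Set.Ici l) := by
    apply antitoneOn_of_deriv_nonpos (convex_Ici l)
    · exact hcont.mono (Set.Ici_subset_Ici.mpr hl0)
    · intro t ht
      rw [interior_Ici] at ht
      exact (hDA t ht).differentiableAt.differentiableWithinAt
    · intro t ht
      rw [interior_Ici] at ht
      rw [(hDA t ht).deriv]
      have := hineq t (le_of_lt (lt_of_le_of_lt hl0 ht))
      nlinarith [sq_nonneg (y t)]
  -- y stays negative on Ici l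
  have hyneg : ∀ t ∈ Set.Ici l, y t < 0 := fun t ht =>
    lt_of_le_of_lt (hanti Set.self_mem_Ici ht ht) hneg
  -- g t = -(y t)⁻¹ + t/2 is antitone on Ici l
  set g : ℝ → ℝ := fun t => -(y t)⁻¹ + t / 2 with hg
  have hganti : AntitoneOn g (Set.Ici l) := by
    apply antitoneOn_of_deriv_nonpos (convex_Ici l)
    · apply ContinuousOn.add
      · exact ((hcont.mono (Set.Ici_subset_Ici.mpr hl0)).inv₀
          (fun t ht => ne_of_lt (hyneg t ht))).neg
      · exact (continuousOn_id.div_const 2)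
    · intro t ht
      rw [interior_Ici] at ht
      have hDg : HasDerivAt g (y' t / (y t) ^ 2 + 1 / 2) t := by
        have h1 := ((hDA t ht).inv (ne_of_lt (hyneg t (Set.mem_Ici.mpr (le_of_lt ht))))).neg
        have h2 := (hasDerivAt_id t).div_const 2
        have this : HasDerivAt (fun x => -(y x)⁻¹ + x / 2) (-(-y' t / y t ^ 2) + 1 / 2) t := h1.add h2
        convert this using 1
        ring
      exact hDg.differentiableAt.differentiableWithinAt
    · intro t ht
      rw [interior_Ici] at ht
      have hyt := hyneg t (Set.mem_Ici.mpr (le_of_lt ht))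
      have hDg : HasDerivAt g (y' t / (y t) ^ 2 + 1 / 2) t := by
        have h1 := ((hDA t ht).inv (ne_of_lt hyt)).neg
        have h2 := (hasDerivAt_id t).div_const 2
        have this : HasDerivAt (fun x => -(y x)⁻¹ + x / 2) (-(-y' t / y t ^ 2) + 1 / 2) t := h1.add h2
        convert this using 1
        ring
      rw [hDg.deriv]
      have hy2 : (0:ℝ) < (y t) ^ 2 := by nlinarith
      have := hineq t (le_of_lt (lt_of_le_of_lt hl0 ht))
      rw [div_add' _ _ _ (ne_of_gt hy2)]
      apply div_nonpos_of_nonpos_of_nonneg _ (le_of_lt hy2)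
      nlinarith
  -- derive the contradiction at T = l - 2 * (y l)⁻¹
  have hinv : (y l)⁻¹ < 0 := inv_lt_zero.mpr hneg
  obtain ⟨T, hT⟩ : ∃ T, T = l - 2 * (y l)⁻¹ := ⟨_, rfl⟩
  have hTl : l ≤ T := by rw [hT]; linarith
  have h1 : g T ≤ g l := hganti Set.self_mem_Ici hTl hTl
  have h2 : (y T)⁻¹ < 0 := inv_lt_zero.mpr (hyneg T hTl)
  have heq : g l = T / 2 := by rw [hT]; simp only [hg]; ring
  have hlt : T / 2 < g T := by simp only [hg]; linarith
  exact lt_irrefl _ (hlt.trans_le (h1.trans_eq heq))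
end

section
/- Let Λ ∈ (0,∞]. Suppose β, v : [0,Λ) → ℝ are differentiable and g, h, α : [0,Λ) → ℝ are functions such that for every λ ∈ [0,Λ): β(λ) > 0, h(λ) ≥ 0, α(λ) ≥ 0, 0 < v(λ) < 1, the Raychaudhuri equation β' = -β² - ½h² - ½g holds, the energy condition g ≥ (5/2)h² + 4βh + 2α holds, and v' = β(1-v)². Then for every λ ∈ [0,Λ): (β²/v²)·((v/β)' - v² + v - 1) ≥ (7/4)h² + α + |2β/v - β|·h. -/
/-- The domain `[0,Λ)` for `Λ ∈ (0,∞]`, viewed as a subset of `ℝ`. -/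
def genDom (Λ : EReal) : Set ℝ := {x : ℝ | 0 ≤ x ∧ (x : EReal) < Λ}

lemma genDom_uniqueDiffOn (Λ : EReal) (hΛ : 0 < Λ) : UniqueDiffOn ℝ (genDom Λ) := by
  have hconv : Convex ℝ (genDom Λ) := by
    rw [convex_iff_ordConnected]
    constructor
    intro x hx y hy z hz
    exact ⟨le_trans hx.1 hz.1, lt_of_le_of_lt (by exact_mod_cast hz.2) hy.2⟩
  obtain ⟨c, hc0, hcΛ⟩ := exists_between hΛ
  have hcne : c ≠ ⊤ := fun hc => by rw [hc] at hcΛ; exact not_top_lt hcΛ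
  have hcne' : c ≠ ⊥ := fun hc => by simp [hc] at hc0
  set t := c.toReal with ht
  have htc : (t : EReal) = c := EReal.coe_toReal hcne hcne'
  have htpos : 0 < t := by
    have := hc0; rw [← htc] at this; exact_mod_cast this
  have hsub : Set.Ioo 0 t ⊆ genDom Λ := by
    intro x hx
    refine ⟨hx.1.le, ?_⟩
    calc (x : EReal) < (t : EReal) := by exact_mod_cast hx.2
    _ = c := htc
    _ < Λ := hcΛ
  have hne : (interior (genDom Λ)).Nonempty := by
    refine ⟨t / 2, ?_⟩
    apply interior_mono hsub
    rw [interior_eq_iff_isOpen.mpr isOpen_Ioo]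
    constructor <;> linarith
  exact uniqueDiffOn_convex hconv hne

/-- Scalar form of the gauge inequality in the proof of Theorem 1.2: with
`β = ½ tr K > 0`, `h = |K̂| ≥ 0`, `α = |α̂| ≥ 0`, `g = G(k,k)`, the Raychaudhuri
equation `β' = -β² - ½h² - ½g`, the energy condition `g ≥ (5/2)h² + 4βh + 2α`,
`0 < v < 1` and `v' = β(1-v)²`, one has
`(β²/v²)·((v/β)' - v² + v - 1) ≥ (7/4)h² + α + |2β/v - β|·h` on `[0,Λ)`. -/
theorem stmt_5 (Λ : EReal) (hΛ : 0 < Λ) (β v g h α β' v' q' : ℝ → ℝ)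
    (hβpos : ∀ l ∈ genDom Λ, 0 < β l)
    (hh : ∀ l ∈ genDom Λ, 0 ≤ h l)
    (hα : ∀ l ∈ genDom Λ, 0 ≤ α l)
    (hv01 : ∀ l ∈ genDom Λ, 0 < v l ∧ v l < 1)
    (hβderiv : ∀ l ∈ genDom Λ, HasDerivWithinAt β (β' l) (genDom Λ) l)
    (hray : ∀ l ∈ genDom Λ, β' l = -(β l) ^ 2 - (h l) ^ 2 / 2 - g l / 2)
    (henergy : ∀ l ∈ genDom Λ,
      (5 / 2 : ℝ) * (h l) ^ 2 + 4 * β l * h l + 2 * α l ≤ g l)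
    (hvderiv : ∀ l ∈ genDom Λ, HasDerivWithinAt v (v' l) (genDom Λ) l)
    (hvode : ∀ l ∈ genDom Λ, v' l = β l * (1 - v l) ^ 2)
    (hq : ∀ l ∈ genDom Λ, HasDerivWithinAt (fun x => v x / β x) (q' l) (genDom Λ) l) :
    ∀ l ∈ genDom Λ,
      (7 / 4 : ℝ) * (h l) ^ 2 + α l + |2 * β l / v l - β l| * h l ≤
        (β l) ^ 2 / (v l) ^ 2 * (q' l - (v l) ^ 2 + v l - 1) := by
  intro l hl
  have hud := genDom_uniqueDiffOn Λ hΛ l hl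
  have hb : 0 < β l := hβpos l hl
  have hdiv : HasDerivWithinAt (fun x => v x / β x)
      ((v' l * β l - v l * β' l) / β l ^ 2) (genDom Λ) l :=
    (hvderiv l hl).div (hβderiv l hl) hb.ne'
  have hq' : q' l = (v' l * β l - v l * β' l) / β l ^ 2 := by
    rw [← (hq l hl).derivWithin hud, hdiv.derivWithin hud]
  obtain ⟨hv0, hv1⟩ := hv01 l hl
  have hh0 := hh l hl
  have hα0 := hα l hl
  have hE := henergy l hl
  set b := β l
  set vv := v l
  set hh' := h l
  set aa := α l
  set gg := g l
  -- simplify RHS to (h² + g)/(2v)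
  have hrhs : b ^ 2 / vv ^ 2 * (q' l - vv ^ 2 + vv - 1) = (hh' ^ 2 + gg) / (2 * vv) := by
    rw [hq', hvode l hl, hray l hl]
    field_simp
    ring
  rw [hrhs]
  have habs : |2 * b / vv - b| = 2 * b / vv - b := by
    rw [abs_of_pos]
    have h2 : b < 2 * b / vv := by
      rw [lt_div_iff₀ hv0]; nlinarith
    linarith
  rw [habs]
  rw [le_div_iff₀ (by positivity)]
  have e : (2 * b / vv) * vv = 2 * b := by field_simp
  nlinarith [mul_nonneg (sq_nonneg hh') (by linarith : (0:ℝ) ≤ 1 - vv),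
    mul_nonneg hα0 (by linarith : (0:ℝ) ≤ 1 - vv),
    mul_nonneg (mul_nonneg hb.le hv0.le) hh0, e, hE]
end

section
/- Let Λ ∈ (0,∞]. Suppose β, v : [0,Λ) → ℝ are differentiable and g, h, α : [0,Λ) → ℝ are functions such that for every λ ∈ [0,Λ): β(λ) > 0, h(λ) ≥ 0, α(λ) ≥ 0, 0 < v(λ) < 1, the Raychaudhuri equation β' = -β² - ½h² - ½g holds, the energy condition g ≥ (5/2)h² + 4βh + 2α holds, and v' = β(1-v)². Define a(λ) = exp(∫₀^λ β(u)/v(u) du). Then a is twice differentiable with a' = aβ/v, a(λ) ≥ 1 for every λ, and for every λ ∈ [0,Λ): a²g - a·(2a' - 2aβ)' ≥ |4a' - 2aβ|·a·h + (5/2)·a²h² + 2a²α. -/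
open MeasureTheory

/-- Scalar form of the gauge construction in the proof of Theorem 1.2: with
`β = ½ tr K > 0`, `h = |K̂| ≥ 0`, `α = |α̂| ≥ 0`, `g = G(k,k)`, the Raychaudhuri
equation `β' = -β² - ½h² - ½g`, the energy condition `g ≥ (5/2)h² + 4βh + 2α`,
`0 < v < 1` and `v' = β(1-v)²`, the function `a(λ) = exp(∫₀^λ β/v)` satisfies
`a' = aβ/v`, `a ≥ 1`, is twice differentiable, and
`a²g - a·(2a' - 2aβ)' ≥ |4a' - 2aβ|·a·h + (5/2)a²h² + 2a²α` on `[0,Λ)`. -/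
theorem stmt_6 (Λ : EReal) (hΛ : 0 < Λ) (β v g h α : ℝ → ℝ) (β' v' : ℝ → ℝ)
    (hβpos : ∀ l ∈ genDom Λ, 0 < β l)
    (hh : ∀ l ∈ genDom Λ, 0 ≤ h l)
    (hα : ∀ l ∈ genDom Λ, 0 ≤ α l)
    (hv01 : ∀ l ∈ genDom Λ, 0 < v l ∧ v l < 1)
    (hβderiv : ∀ l ∈ genDom Λ, HasDerivWithinAt β (β' l) (genDom Λ) l)
    (hray : ∀ l ∈ genDom Λ, β' l = -(β l) ^ 2 - (h l) ^ 2 / 2 - g l / 2)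
    (henergy : ∀ l ∈ genDom Λ,
      (5 / 2 : ℝ) * (h l) ^ 2 + 4 * β l * h l + 2 * α l ≤ g l)
    (hvderiv : ∀ l ∈ genDom Λ, HasDerivWithinAt v (v' l) (genDom Λ) l)
    (hvode : ∀ l ∈ genDom Λ, v' l = β l * (1 - v l) ^ 2)
    (a : ℝ → ℝ)
    (ha : ∀ l : ℝ, a l = Real.exp (∫ u in (0 : ℝ)..l, β u / v u)) :
    ∀ l ∈ genDom Λ,
      HasDerivWithinAt a (a l * β l / v l) (genDom Λ) l ∧
      1 ≤ a l ∧
      ∃ D : ℝ,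
        HasDerivWithinAt (fun x => 2 * (a x * β x / v x) - 2 * a x * β x) D
          (genDom Λ) l ∧
        |4 * (a l * β l / v l) - 2 * a l * β l| * a l * h l +
            (5 / 2 : ℝ) * (a l) ^ 2 * (h l) ^ 2 + 2 * (a l) ^ 2 * α l ≤
          (a l) ^ 2 * g l - a l * D := by
  have hcontβ : ContinuousOn β (genDom Λ) := fun x hx => (hβderiv x hx).continuousWithinAt
  have hcontv : ContinuousOn v (genDom Λ) := fun x hx => (hvderiv x hx).continuousWithinAt
  have hcontf : ContinuousOn (fun u => β u / v u) (genDom Λ) :=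
    hcontβ.div hcontv (fun x hx => (hv01 x hx).1.ne')
  intro l hl
  obtain ⟨b, hlb, hbΛ⟩ := EReal.lt_iff_exists_real_btwn.mp hl.2
  have hlbR : l < b := EReal.coe_lt_coe_iff.mp hlb
  have hbS : b ∈ genDom Λ := ⟨le_of_lt (lt_of_le_of_lt hl.1 hlbR), hbΛ⟩
  have hIbS : Set.Icc (0:ℝ) b ⊆ genDom Λ := by
    intro y hy
    exact ⟨hy.1, lt_of_le_of_lt (EReal.coe_le_coe_iff.mpr hy.2) hbS.2⟩
  have hlI : l ∈ Set.Icc (0:ℝ) b := ⟨hl.1, hlbR.le⟩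
  have hcontI : ContinuousOn (fun u => β u / v u) (Set.Icc 0 b) := hcontf.mono hIbS
  have hInt : IntervalIntegrable (fun u => β u / v u) volume 0 l := by
    apply (hcontI.mono ?_).intervalIntegrable
    rw [Set.uIcc_of_le hl.1]
    exact Set.Icc_subset_Icc le_rfl hlbR.le
  haveI : Fact (l ∈ Set.Icc (0:ℝ) b) := ⟨hlI⟩
  have hmeas : StronglyMeasurableAtFilter (fun u => β u / v u) (nhdsWithin l (Set.Icc (0:ℝ) b)) :=
    hcontI.stronglyMeasurableAtFilter_nhdsWithin measurableSet_Icc l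
  have hFderiv : HasDerivWithinAt (fun x => ∫ u in (0:ℝ)..x, β u / v u) (β l / v l)
      (Set.Icc (0:ℝ) b) l :=
    intervalIntegral.integral_hasDerivWithinAt_right hInt hmeas (hcontI l hlI)
  have hmem : Set.Icc (0:ℝ) b ∈ nhdsWithin l (genDom Λ) :=
    mem_nhdsWithin.mpr ⟨Set.Iio b, isOpen_Iio, hlbR, fun y hy => ⟨hy.2.1, hy.1.le⟩⟩
  have haderiv : HasDerivWithinAt a (a l * β l / v l) (genDom Λ) l := by
    have h2 := (hFderiv.mono_of_mem_nhdsWithin hmem).exp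
    have heq : (fun x => Real.exp (∫ u in (0:ℝ)..x, β u / v u)) = a := (funext ha).symm
    rw [heq] at h2
    convert h2 using 1
    rw [ha l]; ring
  have hVpos := (hv01 l hl).1
  have hVlt := (hv01 l hl).2
  have hBpos := hβpos l hl
  have hHnn := hh l hl
  have hαnn := hα l hl
  have ha1 : 1 ≤ a l := by
    rw [ha l]
    apply Real.one_le_exp
    apply intervalIntegral.integral_nonneg hl.1
    intro u hu
    have huS : u ∈ genDom Λ := hIbS ⟨hu.1, hu.2.trans hlbR.le⟩
    exact div_nonneg (hβpos u huS).le (hv01 u huS).1.le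
  have hApos : (0:ℝ) < a l := lt_of_lt_of_le one_pos ha1
  refine ⟨haderiv, ha1, ?_⟩
  have hβd := hβderiv l hl
  have hvd := hvderiv l hl
  have hd1 : HasDerivWithinAt (fun x => a x * β x)
      (a l * β l / v l * β l + a l * β' l) (genDom Λ) l := haderiv.mul hβd
  have hd2 : HasDerivWithinAt (fun x => a x * β x / v x)
      (((a l * β l / v l * β l + a l * β' l) * v l - a l * β l * v' l) / v l ^ 2)
      (genDom Λ) l := hd1.div hvd hVpos.ne'
  have hd3 : HasDerivWithinAt (fun x => 2 * (a x * β x / v x))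
      (2 * (((a l * β l / v l * β l + a l * β' l) * v l - a l * β l * v' l) / v l ^ 2))
      (genDom Λ) l := hd2.const_mul 2
  have hd4 : HasDerivWithinAt (fun x => 2 * a x * β x)
      (2 * (a l * β l / v l) * β l + 2 * a l * β' l) (genDom Λ) l := by
    have h5 := (haderiv.const_mul (2:ℝ)).mul hβd
    exact h5
  have hD : HasDerivWithinAt (fun x => 2 * (a x * β x / v x) - 2 * a x * β x)
      (2 * (((a l * β l / v l * β l + a l * β' l) * v l - a l * β l * v' l) / v l ^ 2)
        - (2 * (a l * β l / v l) * β l + 2 * a l * β' l)) (genDom Λ) l := hd3.sub hd4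
  have hDval : 2 * (((a l * β l / v l * β l + a l * β' l) * v l - a l * β l * v' l) / v l ^ 2)
        - (2 * (a l * β l / v l) * β l + 2 * a l * β' l)
      = -(a l * (1 - v l) * ((h l) ^ 2 + g l) / v l) := by
    rw [hray l hl, hvode l hl]
    field_simp
    ring
  rw [hDval] at hD
  refine ⟨_, hD, ?_⟩
  have habs : |4 * (a l * β l / v l) - 2 * a l * β l| = 2 * a l * β l * (2 - v l) / v l := by
    have hrw : 4 * (a l * β l / v l) - 2 * a l * β l = 2 * a l * β l * (2 - v l) / v l := by
      field_simp; ring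
    rw [abs_of_nonneg]
    · exact hrw
    · rw [hrw]
      apply div_nonneg _ hVpos.le
      have h2v : (0:ℝ) ≤ 2 - v l := by linarith
      have : (0:ℝ) ≤ 2 * a l * β l := by positivity
      exact mul_nonneg this h2v
  rw [habs]
  have hnum : 0 ≤ g l + (1 - v l) * (h l) ^ 2 - 2 * β l * (2 - v l) * h l
      - 5 / 2 * v l * (h l) ^ 2 - 2 * v l * α l := by
    nlinarith [henergy l hl, mul_nonneg (sub_nonneg.mpr hVlt.le) (sq_nonneg (h l)),
      mul_nonneg (mul_nonneg hBpos.le hVpos.le) hHnn,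
      mul_nonneg (sub_nonneg.mpr hVlt.le) hαnn]
  have hQ : 0 ≤ (a l) ^ 2 * (g l + (1 - v l) * (h l) ^ 2 - 2 * β l * (2 - v l) * h l
      - 5 / 2 * v l * (h l) ^ 2 - 2 * v l * α l) / v l :=
    div_nonneg (mul_nonneg (sq_nonneg _) hnum) hVpos.le
  have hEq : (a l) ^ 2 * g l - a l * (-(a l * (1 - v l) * ((h l) ^ 2 + g l) / v l))
      - (2 * a l * β l * (2 - v l) / v l * a l * h l
        + (5 / 2 : ℝ) * (a l) ^ 2 * (h l) ^ 2 + 2 * (a l) ^ 2 * α l)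
      = (a l) ^ 2 * (g l + (1 - v l) * (h l) ^ 2 - 2 * β l * (2 - v l) * h l
        - 5 / 2 * v l * (h l) ^ 2 - 2 * v l * α l) / v l := by
    field_simp
    ring
  linarith [hEq, hQ]
end

section
/- Let S and h be real symmetric 2×2 matrices with tr h = 0, and let w ∈ ℝ². Then -(tr S)·⟨w, h·w⟩ - ‖S‖² - |w|²·tr(h·S) ≤ ½·⟨w, h·w⟩² + ¼·|w|⁴·‖h‖², where ‖·‖ is the Frobenius norm, ⟨·,·⟩ the Euclidean inner product and |·| the Euclidean norm on ℝ². -/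
open Matrix

/-- Completing-the-square inequality from the gradient estimate in the proof of
Theorem 1.1: for symmetric 2×2 matrices `S`, `h` with `tr h = 0` and `w ∈ ℝ²`,
`-(tr S)·⟨w,hw⟩ - ‖S‖² - |w|²·tr(h·S) ≤ ½⟨w,hw⟩² + ¼|w|⁴‖h‖²`,
with Frobenius norms and the Euclidean inner product written as sums. -/
theorem stmt_10 (S h : Matrix (Fin 2) (Fin 2) ℝ) (hS : S.IsSymm) (hh : h.IsSymm)
    (htr : h.trace = 0) (w : Fin 2 → ℝ) :
    -(S.trace) * (∑ i : Fin 2, w i * h.mulVec w i) -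
        (∑ i : Fin 2, ∑ j : Fin 2, (S i j) ^ 2) -
        (∑ i : Fin 2, (w i) ^ 2) * (h * S).trace ≤
      (1 / 2 : ℝ) * (∑ i : Fin 2, w i * h.mulVec w i) ^ 2 +
        (1 / 4 : ℝ) * (∑ i : Fin 2, (w i) ^ 2) ^ 2 *
          (∑ i : Fin 2, ∑ j : Fin 2, (h i j) ^ 2) := by
  have hS01 : S 1 0 = S 0 1 := by
    have := congrFun (congrFun hS 1) 0
    simpa [Matrix.transpose_apply] using this.symm
  have hh01 : h 1 0 = h 0 1 := by
    have := congrFun (congrFun hh 1) 0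
    simpa [Matrix.transpose_apply] using this.symm
  have htr' : h 1 1 = -(h 0 0) := by
    rw [Matrix.trace_fin_two] at htr; linarith
  simp only [Matrix.trace_fin_two, Matrix.mulVec, Matrix.mul_apply, dotProduct,
    Fin.sum_univ_two, hS01, hh01, htr']
  set a := S 0 0; set b := S 0 1; set d := S 1 1
  set p := h 0 0; set r := h 0 1
  set u : ℝ := (w 0 ^ 2 + w 1 ^ 2) / 2 with hu
  have key : (1 / 2 : ℝ) * (w 0 * (p * w 0 + r * w 1) + w 1 * (r * w 0 + -p * w 1)) ^ 2 +
      1 / 4 * (w 0 ^ 2 + w 1 ^ 2) ^ 2 * (p ^ 2 + r ^ 2 + (r ^ 2 + (-p) ^ 2)) -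
      (-(a + d) * (w 0 * (p * w 0 + r * w 1) + w 1 * (r * w 0 + -p * w 1)) -
        (a ^ 2 + b ^ 2 + (b ^ 2 + d ^ 2)) -
        (w 0 ^ 2 + w 1 ^ 2) * (p * a + r * b + (r * b + -p * d))) =
      (1 / 2) * (p * w 0 ^ 2 + 2 * r * w 0 * w 1 - p * w 1 ^ 2 + a + d) ^ 2 +
      2 * ((a - d) / 2 + u * p) ^ 2 + 2 * (b + u * r) ^ 2 := by
    rw [hu]; ring
  nlinarith [sq_nonneg (p * w 0 ^ 2 + 2 * r * w 0 * w 1 - p * w 1 ^ 2 + a + d),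
    sq_nonneg ((a - d) / 2 + u * p), sq_nonneg (b + u * r)]
end
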